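/- Every countable group G embeds into a finitely generated group of the form H' × ℤ × ℤ; that is, there exist a finitely generated group H' and an injective group homomorphism from G into H' × ℤ × ℤ. -/

import Mathlib

open Monoid Function

noncomputable section CGEaux

variable (G₀ : Type) [Group G₀] (g : ℤ → G₀)

private def CGE.fwd : (Coprod G₀ (FreeGroup ℤ)) →* (Coprod G₀ (FreeGroup ℤ)) :=
  Coprod.lift Coprod.inl
    (FreeGroup.lift fun n => Coprod.inl (g n) * Coprod.inr (FreeGroup.of n))

private def CGE.bwd : (Coprod G₀ (FreeGroup ℤ)) →* (Coprod G₀ (FreeGroup ℤ)) :=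
  Coprod.lift Coprod.inl
    (FreeGroup.lift fun n => (Coprod.inl (g n))⁻¹ * Coprod.inr (FreeGroup.of n))

private def CGE.Phi : (Coprod G₀ (FreeGroup ℤ)) ≃* (Coprod G₀ (FreeGroup ℤ)) :=
  MonoidHom.toMulEquiv (CGE.fwd G₀ g) (CGE.bwd G₀ g)
    (by ext x <;> simp [CGE.fwd, CGE.bwd, mul_assoc])
    (by ext x <;> simp [CGE.fwd, CGE.bwd, mul_assoc])

namespace CGE

def A : Subgroup (Coprod G₀ (FreeGroup ℤ)) := (Coprod.inr : FreeGroup ℤ →* _).range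

def B : Subgroup (Coprod G₀ (FreeGroup ℤ)) := (A G₀).map (Phi G₀ g).toMonoidHom

def phi : A G₀ ≃* B G₀ g := (Phi G₀ g).subgroupMap (A G₀)

def H1 : Type := HNNExtension (Coprod G₀ (FreeGroup ℤ)) (A G₀) (B G₀ g) (phi G₀ g)

instance : Group (H1 G₀ g) :=
  inferInstanceAs (Group (HNNExtension (Coprod G₀ (FreeGroup ℤ)) (A G₀) (B G₀ g) (phi G₀ g)))

def j : FreeGroup ℤ →* H1 G₀ g :=
  (HNNExtension.of).comp (Coprod.inr)

lemma j_injective : Injective (j G₀ g) := by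
  have : Injective (⇑(HNNExtension.of (G := Coprod G₀ (FreeGroup ℤ)) (A := A G₀) (B := B G₀ g)
      (φ := phi G₀ g)) ∘ ⇑(Coprod.inr (M := G₀) (N := FreeGroup ℤ))) :=
    Function.Injective.comp (HNNExtension.of_injective (φ := phi G₀ g)) Coprod.inr_injective
  exact this

-- key relation in H1
lemma rel1 (n : ℤ) :
    (HNNExtension.of (Coprod.inl (g n)) :
        HNNExtension (Coprod G₀ (FreeGroup ℤ)) (A G₀) (B G₀ g) (phi G₀ g)) =
      HNNExtension.t * HNNExtension.of (Coprod.inr (FreeGroup.of n)) * HNNExtension.t⁻¹ *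
        (HNNExtension.of (Coprod.inr (FreeGroup.of n)))⁻¹ := by
  have ha : (Coprod.inr (FreeGroup.of n) : Coprod G₀ (FreeGroup ℤ)) ∈ A G₀ :=
    ⟨FreeGroup.of n, rfl⟩
  have h := HNNExtension.equiv_eq_conj (φ := phi G₀ g) ⟨_, ha⟩
  have hval : ((phi G₀ g ⟨_, ha⟩ : B G₀ g) : Coprod G₀ (FreeGroup ℤ)) =
      Coprod.inl (g n) * Coprod.inr (FreeGroup.of n) := by
    simp only [phi]
    have h2 := MulEquiv.coe_subgroupMap_apply (CGE.Phi G₀ g) (A G₀) ⟨_, ha⟩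
    exact h2.trans (by simp [Phi, fwd, MonoidHom.toMulEquiv])
  rw [hval] at h
  rw [map_mul] at h
  rw [eq_mul_inv_iff_mul_eq]
  simpa using h

def sigma : FreeGroup ℤ ≃* FreeGroup ℤ := FreeGroup.freeGroupCongr (Equiv.addRight (1 : ℤ))

def A' : Subgroup (H1 G₀ g) := (j G₀ g).range

def eA : FreeGroup ℤ ≃* A' G₀ g := MonoidHom.ofInjective (j_injective G₀ g)

def phi' : A' G₀ g ≃* A' G₀ g :=
  ((eA G₀ g).symm.trans sigma).trans (eA G₀ g)

def H2 : Type := HNNExtension (H1 G₀ g) (A' G₀ g) (A' G₀ g) (phi' G₀ g)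

instance : Group (H2 G₀ g) :=
  inferInstanceAs (Group (HNNExtension (H1 G₀ g) (A' G₀ g) (A' G₀ g) (phi' G₀ g)))

lemma rel2 (w : FreeGroup ℤ) :
    (HNNExtension.of (j G₀ g (sigma w)) :
        HNNExtension (H1 G₀ g) (A' G₀ g) (A' G₀ g) (phi' G₀ g)) =
      HNNExtension.t * HNNExtension.of (j G₀ g w) * HNNExtension.t⁻¹ := by
  have hw : j G₀ g w ∈ A' G₀ g := ⟨w, rfl⟩
  have h := HNNExtension.equiv_eq_conj (φ := phi' G₀ g) ⟨_, hw⟩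
  have hval : ((phi' G₀ g ⟨_, hw⟩ : A' G₀ g) : H1 G₀ g) = j G₀ g (sigma w) := by
    have hsymm : (eA G₀ g).symm ⟨_, hw⟩ = w := by
      apply (eA G₀ g).injective
      rw [MulEquiv.apply_symm_apply]
      exact Subtype.ext (MonoidHom.ofInjective_apply (j_injective G₀ g) (x := w)).symm
    simp only [phi', MulEquiv.trans_apply, hsymm]
    exact MonoidHom.ofInjective_apply (j_injective G₀ g) (x := sigma w)
  rw [hval] at h
  exact h

lemma closure_eq_top (hg : Function.Surjective g) :
    Subgroup.closure ({HNNExtension.t, HNNExtension.of HNNExtension.t,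
        HNNExtension.of (j G₀ g (FreeGroup.of 0))} :
        Set (HNNExtension (H1 G₀ g) (A' G₀ g) (A' G₀ g) (phi' G₀ g))) = ⊤ := by
  set C := Subgroup.closure ({HNNExtension.t, HNNExtension.of HNNExtension.t,
        HNNExtension.of (j G₀ g (FreeGroup.of 0))} :
        Set (HNNExtension (H1 G₀ g) (A' G₀ g) (A' G₀ g) (phi' G₀ g))) with hC
  let F : H1 G₀ g →* HNNExtension (H1 G₀ g) (A' G₀ g) (A' G₀ g) (phi' G₀ g) :=
    HNNExtension.of
  have ht2 : (HNNExtension.t : HNNExtension (H1 G₀ g) (A' G₀ g) (A' G₀ g) (phi' G₀ g)) ∈ C :=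
    Subgroup.subset_closure (by simp)
  have ht1 : F (HNNExtension.t : H1 G₀ g) ∈ C :=
    Subgroup.subset_closure (by simp only [F, Set.mem_insert_iff, Set.mem_singleton_iff]; tauto)
  have h0 : F (j G₀ g (FreeGroup.of 0)) ∈ C :=
    Subgroup.subset_closure (by simp only [F, Set.mem_insert_iff, Set.mem_singleton_iff]; tauto)
  have hofn : ∀ n : ℤ, F (j G₀ g (FreeGroup.of n)) ∈ C := by
    intro n
    induction n using Int.induction_on with
    | zero => exact h0
    | succ k ih =>
      have hs : sigma (FreeGroup.of (k : ℤ)) = FreeGroup.of ((k : ℤ) + 1) := by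
        simp [sigma]
      have h := rel2 G₀ g (FreeGroup.of (k : ℤ))
      rw [hs] at h
      rw [h]
      exact C.mul_mem (C.mul_mem ht2 ih) (C.inv_mem ht2)
    | pred k ih =>
      have hs : sigma (FreeGroup.of (-(k : ℤ) - 1)) = FreeGroup.of (-(k : ℤ)) := by
        simp [sigma]
      have h := rel2 G₀ g (FreeGroup.of (-(k : ℤ) - 1))
      rw [hs] at h
      have h2 : F (j G₀ g (FreeGroup.of (-(k : ℤ) - 1))) =
          HNNExtension.t⁻¹ * F (j G₀ g (FreeGroup.of (-(k : ℤ)))) *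
            HNNExtension.t := by
        rw [h]; group; rfl
      rw [h2]
      exact C.mul_mem (C.mul_mem (C.inv_mem ht2) ih) ht2
  have hjw : ∀ w : FreeGroup ℤ, F (j G₀ g w) ∈ C := by
    intro w
    induction w using FreeGroup.induction_on with
    | C1 => simpa using C.one_mem
    | of n => exact hofn n
    | inv_of n ih => rw [map_inv, map_inv]; exact C.inv_mem ih
    | mul a b iha ihb => rw [map_mul, map_mul]; exact C.mul_mem iha ihb
  have hinl : ∀ x : G₀, F (HNNExtension.of (Coprod.inl x)) ∈ C := by
    intro x
    obtain ⟨n, rfl⟩ := hg x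
    have h := rel1 G₀ g n
    have h2 : F (HNNExtension.of (Coprod.inl (g n))) =
        F HNNExtension.t * F (HNNExtension.of (Coprod.inr (FreeGroup.of n))) *
          (F HNNExtension.t)⁻¹ *
          (F (HNNExtension.of (Coprod.inr (FreeGroup.of n))))⁻¹ := by
      have key : ∀ x y z w : H1 G₀ g, F (x * y * z⁻¹ * w⁻¹) = F x * F y * (F z)⁻¹ * (F w)⁻¹ := by
        intro x y z w; simp [map_mul, map_inv]
      exact (congrArg F h).trans (key _ _ _ _)
    rw [h2]
    exact C.mul_mem (C.mul_mem (C.mul_mem ht1 (hjw _)) (C.inv_mem ht1)) (C.inv_mem (hjw _))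
  have hK : ∀ k : Coprod G₀ (FreeGroup ℤ),
      F (HNNExtension.of k) ∈ C := by
    intro k
    induction k using Coprod.induction_on with
    | inl x => exact hinl x
    | inr w => exact hjw w
    | mul a b iha ihb =>
      convert C.mul_mem iha ihb using 1
      exact (congrArg F (map_mul (HNNExtension.of (φ := phi G₀ g)) a b)).trans (map_mul F _ _)
  have hH1 : ∀ h : H1 G₀ g, F h ∈ C := by
    intro h
    induction h using HNNExtension.induction_on with
    | of k => exact hK k
    | t => exact ht1
    | mul a b iha ihb => convert C.mul_mem iha ihb using 1; exact map_mul F _ _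
    | inv a iha => convert C.inv_mem iha using 1; exact map_inv F _
  rw [eq_top_iff]
  intro x hx
  clear hx
  induction x using HNNExtension.induction_on with
  | of h => exact hH1 h
  | t => exact ht2
  | mul a b iha ihb => exact C.mul_mem iha ihb
  | inv a iha => exact C.inv_mem iha

theorem main (hg : Function.Surjective g) :
    ∃ (H' : Type) (_ : Group H'), Group.FG H' ∧
      ∃ f : G₀ →* H', Function.Injective f := by
  refine ⟨HNNExtension (H1 G₀ g) (A' G₀ g) (A' G₀ g) (phi' G₀ g), inferInstance, ?_, ?_⟩
  · rw [Group.fg_iff]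
    exact ⟨_, closure_eq_top G₀ g hg, ((Set.finite_singleton _).insert _).insert _⟩
  · refine ⟨(HNNExtension.of (φ := phi' G₀ g)).comp
      ((HNNExtension.of (φ := phi G₀ g)).comp (Coprod.inl)), ?_⟩
    have h1 : Function.Injective
        (⇑(HNNExtension.of (φ := phi' G₀ g)) ∘
          (⇑(HNNExtension.of (φ := phi G₀ g)) ∘ ⇑(Coprod.inl (M := G₀) (N := FreeGroup ℤ)))) :=
      Function.Injective.comp (HNNExtension.of_injective (φ := phi' G₀ g))
        (Function.Injective.comp (HNNExtension.of_injective (φ := phi G₀ g)) Coprod.inl_injective)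
    exact h1

end CGE

end CGEaux

/-- Every countable group `G` embeds into a finitely generated group of the form
`H' × ℤ × ℤ`. -/
theorem countable_group_embeds_in_fg_prod_int_int (G : Type*) [Group G] [Countable G] :
    ∃ (H' : Type) (_ : Group H'), Group.FG H' ∧
      ∃ f : G →* H' × Multiplicative ℤ × Multiplicative ℤ, Function.Injective f := by
  have : Nonempty G := ⟨1⟩
  obtain ⟨f₀, hf₀⟩ := exists_surjective_nat G
  let G₀ : Type := Shrink.{0} G
  let e : G ≃* G₀ := (Shrink.mulEquiv.{0, _} (α := G)).symm
  let g : ℤ → G₀ := fun n => e (f₀ n.natAbs)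
  have hg : Function.Surjective g := by
    intro x
    obtain ⟨m, hm⟩ := hf₀ (e.symm x)
    refine ⟨(m : ℤ), ?_⟩
    simp [g, Int.natAbs_natCast, hm]
  obtain ⟨H', instH', hfg, f, hf⟩ := CGE.main G₀ g hg
  refine ⟨H', instH', hfg, ?_⟩
  refine ⟨(MonoidHom.inl H' (Multiplicative ℤ × Multiplicative ℤ)).comp
    (f.comp e.toMonoidHom), ?_⟩
  intro a b hab
  apply e.injective
  apply hf
  simpa [MonoidHom.inl, Prod.ext_iff] using hab
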